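/- Fix an integer ℓ with |ℓ| ≥ 2 and let E_ℓ : S¹ → S¹ be x ↦ ℓx (mod 1). For h₁, h₂ ∈ Homeo₊(S¹) one has h₁⁻¹ ∘ E_ℓ ∘ h₁ = h₂⁻¹ ∘ E_ℓ ∘ h₂ if and only if h₂ = R_{j/(ℓ−1)} ∘ h₁ for some integer j, where R_t denotes the rotation x ↦ x + t of S¹. Consequently, for every f ∈ CE_ℓ(S¹) there are exactly |ℓ − 1| homeomorphisms h ∈ Homeo₊(S¹) with h⁻¹ ∘ E_ℓ ∘ h = f. -/

import Mathlib

open MeasureTheory Filter Topology ENNReal Function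

noncomputable section

attribute [local instance] ZeroLEOneClass.factZeroLtOne

/-- The circle `ℝ/ℤ`. -/
abbrev Circle1 := AddCircle (1 : ℝ)

/-- `F` is an increasing (degree-one) lift of the circle map `f`. -/
def IsOrientedLift (f : Circle1 → Circle1) (F : ℝ → ℝ) : Prop :=
  Continuous F ∧ StrictMono F ∧ (∀ x : ℝ, F (x + 1) = F x + 1) ∧
    ∀ x : ℝ, f (↑x) = ↑(F x)

/-- The linear expanding circle map `E_ℓ : x ↦ ℓ·x (mod 1)`. -/
def expandingMap (ℓ : ℤ) : C(Circle1, Circle1) :=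
  ⟨fun x => ℓ • x, continuous_zsmul ℓ⟩

/-- `CE_ℓ(S¹)`: continuous circle maps conjugated to `E_ℓ` by an orientation-preserving
homeomorphism. -/
def CEl (ℓ : ℤ) : Set C(Circle1, Circle1) :=
  {f | ∃ h : Circle1 ≃ₜ Circle1, (∃ F, IsOrientedLift (⇑h) F) ∧
    ∀ x, f x = h.symm (expandingMap ℓ (h x))}

/-- Two orientation-preserving homeomorphisms `h₁`, `h₂` conjugate `E_ℓ` to the same map if and
only if they differ by a rotation by a multiple of `1/(ℓ-1)`; consequently every `f ∈ CE_ℓ(S¹)`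
is conjugated to `E_ℓ` by exactly `|ℓ - 1|` orientation-preserving homeomorphisms. -/
lemma Circle1.coe_eq_coe {a b : ℝ} : (↑a : Circle1) = ↑b ↔ ∃ k : ℤ, b - a = k := by
  rw [show ((a : Circle1) = b ↔ -a + b ∈ AddSubgroup.zmultiples (1:ℝ)) from QuotientAddGroup.eq]
  constructor
  · rintro h
    obtain ⟨k, hk⟩ := AddSubgroup.mem_zmultiples_iff.mp h
    exact ⟨k, by simp at hk; linarith⟩
  · rintro ⟨k, hk⟩
    exact AddSubgroup.mem_zmultiples_iff.mpr ⟨k, by simp; linarith⟩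

lemma Circle1.coe_zsmul (ℓ : ℤ) (x : ℝ) : ℓ • ((x : ℝ) : Circle1) = ↑((ℓ:ℝ) * x) := by
  rw [show ((((ℓ:ℝ) * x) : ℝ) : Circle1) = ↑(ℓ • x) by norm_num]
  exact (QuotientAddGroup.mk_zsmul _ x ℓ).symm

lemma int_valued_const {w : ℝ → ℝ} (hc : Continuous w) (hint : ∀ x, ∃ k : ℤ, w x = k)
    (x y : ℝ) : w x = w y := by
  by_contra hne
  wlog hlt : w x < w y generalizing x y
  · exact this y x (Ne.symm hne) (lt_of_le_of_ne (not_lt.mp hlt) (Ne.symm hne))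
  obtain ⟨p, hp⟩ := hint x
  obtain ⟨q, hq⟩ := hint y
  have hpq : p < q := by rw [hp, hq] at hlt; exact_mod_cast hlt
  have hpq' : (p:ℝ) + 1 ≤ q := by exact_mod_cast hpq
  have hmem : (p:ℝ) + 1/2 ∈ Set.uIcc (w x) (w y) := by
    rw [hp, hq, Set.mem_uIcc]
    left; constructor <;> linarith
  obtain ⟨c, -, hc2⟩ := intermediate_value_uIcc hc.continuousOn hmem
  obtain ⟨k, hk⟩ := hint c
  rw [hk] at hc2
  have : (2*k : ℝ) = 2*p + 1 := by linarith
  have : 2*k = 2*p + 1 := by exact_mod_cast this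
  omega

lemma lift_add_int {F : ℝ → ℝ} (h1 : ∀ x, F (x + 1) = F x + 1) (k : ℤ) (x : ℝ) :
    F (x + k) = F x + k := by
  induction k using Int.induction_on with
  | zero => simp
  | succ n ih => have := h1 (x + n); push_cast at *; rw [show x + (n+1) = x + n + 1 by ring]; rw [this, ih]; ring
  | pred n ih =>
      have := h1 (x + (-(n:ℝ) - 1))
      push_cast at *
      rw [show x + (-(n:ℝ)-1) + 1 = x + -n by ring] at this
      linarith

lemma lift_surj {F : ℝ → ℝ} (hc : Continuous F) (h1 : ∀ x, F (x + 1) = F x + 1) :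
    Surjective F := by
  intro y
  obtain ⟨k, hk1⟩ := exists_int_gt (|y - F 0|)
  have habs := abs_lt.mp hk1
  have hk0 : (0:ℝ) ≤ k := le_of_lt (lt_of_le_of_lt (abs_nonneg _) hk1)
  have h2 : F (0 + (-k : ℤ)) ≤ y := by
    rw [lift_add_int h1]; push_cast; linarith [habs.1]
  have h3 : y ≤ F (0 + (k:ℤ)) := by
    rw [lift_add_int h1]; push_cast; linarith [habs.2]
  have hle : (0:ℝ) + ((-k : ℤ):ℝ) ≤ 0 + ((k:ℤ):ℝ) := by push_cast; linarith
  obtain ⟨c, -, hc2⟩ := intermediate_value_Icc hle hc.continuousOn ⟨h2, h3⟩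
  exact ⟨c, hc2⟩

lemma exists_lift_symm (h : Circle1 ≃ₜ Circle1) {F : ℝ → ℝ} (hF : IsOrientedLift (⇑h) F) :
    ∃ G : ℝ → ℝ, IsOrientedLift (⇑h.symm) G ∧ ∀ x, F (G x) = x := by
  obtain ⟨hc, hm, h1, hl⟩ := hF
  have hsurj := lift_surj hc h1
  let e : ℝ ≃o ℝ := StrictMono.orderIsoOfSurjective F hm hsurj
  have hee : ∀ x, e x = F x := fun _ => rfl
  have hFe : ∀ x, F (e.symm x) = x := fun x => by rw [← hee]; exact e.apply_symm_apply x
  refine ⟨fun x => e.symm x, ⟨e.symm.continuous, e.symm.strictMono, ?_, ?_⟩, hFe⟩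
  · intro x
    apply hm.injective
    rw [hFe, h1, hFe]
  · intro x
    have : h ↑(e.symm x) = ↑x := by rw [hl, hFe]
    rw [← this, h.symm_apply_apply]

lemma rotation_of_commute (ℓ : ℤ) (hℓ : 2 ≤ |ℓ|) {g : Circle1 → Circle1}
    {G : ℝ → ℝ} (hGc : Continuous G) (hG1 : ∀ x : ℝ, G (x + 1) = G x + 1)
    (hGl : ∀ x : ℝ, g ↑x = ↑(G x)) (hcomm : ∀ y : Circle1, g (ℓ • y) = ℓ • g y) :
    ∃ j : ℤ, ∀ x : ℝ, G x = x + (j : ℝ) / ((ℓ:ℝ) - 1) := by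
  have hlabs : (2:ℝ) ≤ |(ℓ:ℝ)| := by
    rw [show |(ℓ:ℝ)| = ((|ℓ| : ℤ) : ℝ) by push_cast; rfl]; exact_mod_cast hℓ
  have hl1 : (ℓ:ℝ) - 1 ≠ 0 := by
    intro h
    have : (ℓ:ℝ) = 1 := by linarith
    rw [this] at hlabs; norm_num at hlabs
  -- w is integer valued
  set w : ℝ → ℝ := fun x => G ((ℓ:ℝ) * x) - (ℓ:ℝ) * G x with hw_def
  have hwc : Continuous w := by
    exact (hGc.comp (continuous_const.mul continuous_id)).sub (continuous_const.mul hGc)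
  have hwint : ∀ x, ∃ k : ℤ, w x = k := by
    intro x
    have h1 : (↑(G ((ℓ:ℝ) * x)) : Circle1) = ↑((ℓ:ℝ) * G x) := by
      calc (↑(G ((ℓ:ℝ) * x)) : Circle1) = g ↑((ℓ:ℝ) * x) := (hGl _).symm
        _ = g (ℓ • (↑x : Circle1)) := by rw [Circle1.coe_zsmul]
        _ = ℓ • g ↑x := hcomm _
        _ = ℓ • (↑(G x) : Circle1) := by rw [hGl]
        _ = ↑((ℓ:ℝ) * G x) := Circle1.coe_zsmul ℓ (G x)
    obtain ⟨k, hk⟩ := Circle1.coe_eq_coe.mp h1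
    exact ⟨-k, by simp only [hw_def]; push_cast; linarith⟩
  obtain ⟨m, hm⟩ := hwint 0
  have hconst : ∀ x, G ((ℓ:ℝ) * x) - (ℓ:ℝ) * G x = m := fun x => by
    rw [← hm]; exact int_valued_const hwc hwint x 0
  -- ψ bounded
  set ψ : ℝ → ℝ := fun x => G x - x with hψ_def
  have hψc : Continuous ψ := hGc.sub continuous_id
  obtain ⟨C, hC⟩ := (isCompact_Icc (a := (0:ℝ)) (b := 1)).exists_bound_of_continuousOn
    hψc.continuousOn
  have hψk : ∀ x : ℝ, ∀ k : ℤ, ψ (x + k) = ψ x := by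
    intro x k; simp only [hψ_def]; rw [lift_add_int hG1]; ring
  have hψb : ∀ x, |ψ x| ≤ C := by
    intro x
    have h1 : ψ x = ψ (Int.fract x) := by
      rw [show Int.fract x = x + (-⌊x⌋ : ℤ) by rw [Int.fract]; push_cast; ring, hψk]
    rw [h1]
    exact hC _ ⟨Int.fract_nonneg x, (Int.fract_lt_one x).le⟩
  -- χ
  set χ : ℝ → ℝ := fun x => ψ x + m / ((ℓ:ℝ) - 1) with hχ_def
  have hχmul : ∀ x, χ ((ℓ:ℝ) * x) = (ℓ:ℝ) * χ x := by
    intro x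
    have hG : G ((ℓ:ℝ) * x) = (ℓ:ℝ) * G x + m := by linarith [hconst x]
    simp only [hχ_def, hψ_def]
    rw [hG]
    field_simp
    ring
  have hχn : ∀ (n : ℕ) (x : ℝ), χ ((ℓ:ℝ)^n * x) = (ℓ:ℝ)^n * χ x := by
    intro n
    induction n with
    | zero => simp
    | succ n ih =>
        intro x
        rw [show (ℓ:ℝ)^(n+1) * x = (ℓ:ℝ) * ((ℓ:ℝ)^n * x) by ring, hχmul, ih]
        ring
  have hχb : ∀ x, |χ x| ≤ C + |(m:ℝ) / ((ℓ:ℝ) - 1)| := by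
    intro x
    calc |χ x| ≤ |ψ x| + |(m:ℝ) / ((ℓ:ℝ)-1)| := abs_add_le _ _
      _ ≤ C + |(m:ℝ) / ((ℓ:ℝ)-1)| := by linarith [hψb x]
  set C' := C + |(m:ℝ) / ((ℓ:ℝ) - 1)|
  have hχ0 : ∀ x, χ x = 0 := by
    intro x
    by_contra hne
    have hpos : 0 < |χ x| := abs_pos.mpr hne
    obtain ⟨n, hn⟩ := exists_nat_gt (C' / |χ x|)
    have h2n : (n:ℝ) < 2^n := by exact_mod_cast Nat.lt_two_pow_self (n := n)
    have hpow : (2:ℝ)^n ≤ |(ℓ:ℝ)|^n := pow_le_pow_left₀ (by norm_num) hlabs n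
    have key : |(ℓ:ℝ)|^n * |χ x| ≤ C' := by
      rw [← abs_pow, ← abs_mul, ← hχn n x]; exact hχb _
    have h3 : C' / |χ x| < (n:ℝ) := hn
    have h4 : (n:ℝ) * |χ x| ≤ C' := le_trans (by nlinarith) key
    have h5 : C' < (n:ℝ) * |χ x| := by
      rw [div_lt_iff₀ hpos] at h3; linarith
    linarith
  refine ⟨-m, fun x => ?_⟩
  have := hχ0 x
  simp only [hχ_def, hψ_def] at this
  push_cast
  have h2 : -(m:ℝ) / ((ℓ:ℝ) - 1) = -((m:ℝ) / ((ℓ:ℝ) - 1)) := by ring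
  rw [h2]
  linarith
lemma Circle1.coe_add (a b : ℝ) : ((a + b : ℝ) : Circle1) = ↑a + ↑b := rfl

lemma Circle1.coe_int (k : ℤ) : ((k : ℝ) : Circle1) = 0 := by
  have : ((k:ℝ) : Circle1) = ((0:ℝ) : Circle1) :=
    Circle1.coe_eq_coe.mpr ⟨-k, by push_cast; ring⟩
  simpa using this

lemma ell_facts {ℓ : ℤ} (hℓ : 2 ≤ |ℓ|) : ℓ ≠ 1 ∧ (ℓ:ℝ) - 1 ≠ 0 := by
  have h1 : ℓ ≠ 1 := by rintro rfl; norm_num at hℓ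
  refine ⟨h1, fun h => h1 ?_⟩
  have : (ℓ:ℝ) = 1 := by linarith
  exact_mod_cast this

lemma conj_eq_imp (ℓ : ℤ) (hℓ : 2 ≤ |ℓ|) (h₁ h₂ : Circle1 ≃ₜ Circle1)
    (hF₁ : ∃ F, IsOrientedLift (⇑h₁) F) (hF₂ : ∃ F, IsOrientedLift (⇑h₂) F)
    (hconj : ∀ x, h₁.symm (expandingMap ℓ (h₁ x)) = h₂.symm (expandingMap ℓ (h₂ x))) :
    ∃ j : ℤ, ∀ x, h₂ x = (((j : ℝ) / ((ℓ : ℝ) - 1) : ℝ) : Circle1) + h₁ x := by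
  obtain ⟨F₁, hF₁⟩ := hF₁
  obtain ⟨F₂, hF₂⟩ := hF₂
  obtain ⟨G₁, hG₁, hFG⟩ := exists_lift_symm h₁ hF₁
  set g : Circle1 → Circle1 := fun y => h₂ (h₁.symm y) with hg_def
  have hGc : Continuous (fun x => F₂ (G₁ x)) := hF₂.1.comp hG₁.1
  have hG1 : ∀ x, F₂ (G₁ (x + 1)) = F₂ (G₁ x) + 1 := by
    intro x; rw [hG₁.2.2.1, hF₂.2.2.1]
  have hGl : ∀ x : ℝ, g ↑x = ↑(F₂ (G₁ x)) := by
    intro x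
    simp only [hg_def]
    rw [hG₁.2.2.2 x]
    exact hF₂.2.2.2 _
  have hcomm : ∀ y, g (ℓ • y) = ℓ • g y := by
    intro y
    have h0 := hconj (h₁.symm y)
    rw [h₁.apply_symm_apply] at h0
    have h1 := congrArg h₂ h0
    rw [h₂.apply_symm_apply] at h1
    simpa only [hg_def, expandingMap, ContinuousMap.coe_mk] using h1
  obtain ⟨j, hj⟩ := rotation_of_commute ℓ hℓ hGc hG1 hGl hcomm
  refine ⟨j, fun x => ?_⟩
  obtain ⟨r, hr⟩ := QuotientAddGroup.mk_surjective (h₁ x)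
  have hgx : h₂ x = g (h₁ x) := by simp [hg_def]
  rw [hgx, ← hr]
  show g ↑r = _ + (↑r : Circle1)
  rw [hGl r, hj r, show r + (j:ℝ)/((ℓ:ℝ)-1) = (j:ℝ)/((ℓ:ℝ)-1) + r by ring,
    Circle1.coe_add]

lemma rot_imp_conj (ℓ : ℤ) (hℓ : 2 ≤ |ℓ|) (h₁ h₂ : Circle1 ≃ₜ Circle1) (j : ℤ)
    (hr : ∀ x, h₂ x = (((j : ℝ) / ((ℓ : ℝ) - 1) : ℝ) : Circle1) + h₁ x) :
    ∀ x, h₁.symm (expandingMap ℓ (h₁ x)) = h₂.symm (expandingMap ℓ (h₂ x)) := by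
  obtain ⟨-, hl1⟩ := ell_facts hℓ
  set c : Circle1 := ↑((j:ℝ)/((ℓ:ℝ)-1)) with hc_def
  have hEc : ∀ y : Circle1, ℓ • (c + y) = c + ℓ • y := by
    intro y
    rw [smul_add]
    congr 1
    rw [hc_def, Circle1.coe_zsmul,
      show (ℓ:ℝ) * ((j:ℝ)/((ℓ:ℝ)-1)) = (j:ℝ)/((ℓ:ℝ)-1) + (j:ℝ) by field_simp; ring,
      Circle1.coe_add, Circle1.coe_int, add_zero]
  intro x
  apply h₂.injective
  rw [h₂.apply_symm_apply, hr (h₁.symm (expandingMap ℓ (h₁ x))), h₁.apply_symm_apply]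
  show c + ℓ • (h₁ x) = ℓ • (h₂ x)
  rw [hr x]
  exact (hEc (h₁ x)).symm

lemma lift_rot (h h' : Circle1 ≃ₜ Circle1) {F} (hF : IsOrientedLift (⇑h) F) (t : ℝ)
    (hh' : ∀ x, h' x = (↑t : Circle1) + h x) :
    IsOrientedLift (⇑h') (fun x => F x + t) := by
  obtain ⟨hc, hm, h1, hl⟩ := hF
  refine ⟨hc.add continuous_const, fun a b hab => by show F a + t < F b + t; linarith [hm hab],
    fun x => by show F (x + 1) + t = F x + t + 1; rw [h1]; ring, fun x => ?_⟩
  show h' ↑x = ↑(F x + t)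
  rw [hh', hl, show F x + t = t + F x by ring, Circle1.coe_add]

lemma rot_coe_congr {ℓ : ℤ} (hℓ : 2 ≤ |ℓ|) {j j' : ℤ} (h : (ℓ - 1) ∣ (j - j')) :
    (((j : ℝ) / ((ℓ : ℝ) - 1) : ℝ) : Circle1) = ↑((j' : ℝ) / ((ℓ : ℝ) - 1)) := by
  obtain ⟨-, hl1⟩ := ell_facts hℓ
  obtain ⟨k, hk⟩ := h
  refine Circle1.coe_eq_coe.mpr ⟨-k, ?_⟩
  have h2 : (j:ℝ) - j' = ((ℓ:ℝ) - 1) * k := by exact_mod_cast congrArg (Int.cast : ℤ → ℝ) hk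
  push_cast
  field_simp
  linarith

theorem conjugating_homeos_differ_by_rotation (ℓ : ℤ) (hℓ : 2 ≤ |ℓ|) :
    (∀ h₁ h₂ : Circle1 ≃ₜ Circle1,
      (∃ F, IsOrientedLift (⇑h₁) F) → (∃ F, IsOrientedLift (⇑h₂) F) →
      ((∀ x, h₁.symm (expandingMap ℓ (h₁ x)) = h₂.symm (expandingMap ℓ (h₂ x))) ↔
        ∃ j : ℤ, ∀ x, h₂ x = (((j : ℝ) / ((ℓ : ℝ) - 1) : ℝ) : Circle1) + h₁ x)) ∧
    ∀ f ∈ CEl ℓ,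
      {h : Circle1 ≃ₜ Circle1 | (∃ F, IsOrientedLift (⇑h) F) ∧
        ∀ x, h.symm (expandingMap ℓ (h x)) = f x}.ncard = (ℓ - 1).natAbs := by
  obtain ⟨hne, hl1⟩ := ell_facts hℓ
  constructor
  · intro h₁ h₂ hF₁ hF₂
    constructor
    · exact conj_eq_imp ℓ hℓ h₁ h₂ hF₁ hF₂
    · rintro ⟨j, hj⟩
      exact rot_imp_conj ℓ hℓ h₁ h₂ j hj
  · rintro f ⟨h₀, hF₀, hf₀⟩
    set n := (ℓ - 1).natAbs with hn_def
    have hn0 : n ≠ 0 := fun h => hne (by have := Int.natAbs_eq_zero.mp h; omega)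
    haveI : NeZero n := ⟨hn0⟩
    obtain ⟨F₀, hF₀'⟩ := hF₀
    set S := {h : Circle1 ≃ₜ Circle1 | (∃ F, IsOrientedLift (⇑h) F) ∧
        ∀ x, h.symm (expandingMap ℓ (h x)) = f x} with hS_def
    set t : ZMod n → ℝ := fun a => (((a.val : ℤ) : ℝ)) / ((ℓ:ℝ) - 1) with ht_def
    set e : ZMod n → (Circle1 ≃ₜ Circle1) :=
      fun a => h₀.trans (Homeomorph.addLeft ((↑(t a) : Circle1))) with he_def
    have he_app : ∀ a x, e a x = (↑(t a) : Circle1) + h₀ x := fun a x => rfl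
    have hdvd : ∀ j j' : ℤ,
        ((((j : ℝ) / ((ℓ : ℝ) - 1) : ℝ)) : Circle1) = ↑(((j' : ℝ)) / ((ℓ:ℝ) - 1)) ↔
          (ℓ - 1) ∣ (j - j') := by
      intro j j'
      constructor
      · intro h
        obtain ⟨k, hk⟩ := Circle1.coe_eq_coe.mp h
        have hk' : (j':ℝ) - j = (k:ℝ) * ((ℓ:ℝ) - 1) := by
          field_simp at hk
          linarith
        have hk2 : j' - j = k * (ℓ - 1) := by exact_mod_cast hk'
        exact ⟨-k, by linarith [hk2]⟩
      · exact rot_coe_congr hℓ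
    have hmem : ∀ a, e a ∈ S := by
      intro a
      refine ⟨⟨fun x => F₀ x + t a, lift_rot h₀ (e a) hF₀' (t a) (he_app a)⟩, fun x => ?_⟩
      rw [hf₀ x]
      exact (rot_imp_conj ℓ hℓ h₀ (e a) (a.val : ℤ) (he_app a) x).symm
    have hinj : Function.Injective e := by
      intro a b hab
      have h1 : (↑(t a) : Circle1) = ↑(t b) := by
        have h2 := congrArg (fun (k : Circle1 ≃ₜ Circle1) => k (h₀.symm 0)) hab
        simp only [he_app] at h2
        exact add_right_cancel h2
      have h2 := (hdvd _ _).mp h1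
      have h3 : (((a.val : ℤ) - (b.val : ℤ) : ℤ) : ZMod n) = 0 :=
        (ZMod.intCast_zmod_eq_zero_iff_dvd _ n).mpr (Int.natAbs_dvd.mpr h2)
      push_cast at h3
      rw [ZMod.natCast_zmod_val, ZMod.natCast_zmod_val] at h3
      exact sub_eq_zero.mp h3
    have hsurjS : ∀ h ∈ S, ∃ a, e a = h := by
      rintro h ⟨hFh, hch⟩
      have hconj : ∀ x, h₀.symm (expandingMap ℓ (h₀ x)) = h.symm (expandingMap ℓ (h x)) :=
        fun x => (hf₀ x).symm.trans (hch x).symm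
      obtain ⟨j, hj⟩ := conj_eq_imp ℓ hℓ h₀ h ⟨F₀, hF₀'⟩ hFh hconj
      refine ⟨(j : ZMod n), Homeomorph.ext fun x => ?_⟩
      rw [he_app, hj x]
      congr 1
      apply (hdvd _ _).mpr
      apply Int.natAbs_dvd.mp
      apply (ZMod.intCast_zmod_eq_zero_iff_dvd _ n).mp
      push_cast
      rw [ZMod.natCast_zmod_val]
      exact sub_eq_zero.mpr rfl
    have hbij : Function.Bijective (fun a : ZMod n => (⟨e a, hmem a⟩ : S)) := by
      constructor
      · intro a b hab
        exact hinj (congrArg Subtype.val hab)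
      · rintro ⟨h, hh⟩
        obtain ⟨a, ha⟩ := hsurjS h hh
        exact ⟨a, Subtype.ext ha⟩
    rw [← Nat.card_coe_set_eq, Nat.card_congr (Equiv.ofBijective _ hbij).symm,
      Nat.card_zmod]


end
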